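/- Under Conditions A and Conditions B̃1–B̃2, there exists an integer t' such that for every integer t ≥ t' there is a number N0 > 0 with the following property: for each coordinate i = 1,…,M, every x ∈ V and every y ∈ 𝒴 with L_{2,i}(y_i) ≥ N0, E_{x,y}[L_{2,i}(Y_i^t) − L_{2,i}(y_i)] ≤ −tΔ, where Δ = (min_{1≤i≤M} ε_i)/10. -/

import Mathlib

open MeasureTheory ProbabilityTheory Filter Set
open scoped ENNReal

noncomputable section

/-- First hitting time (at a time `≥ 1`) of a set along a trajectory, valued in `ℝ≥0∞`
(`∞` if the set is never hit). -/
def hitTime {S : Type*} (V : Set S) (ω : ℕ → S) : ℝ≥0∞ :=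
  sInf {r : ℝ≥0∞ | ∃ n : ℕ, r = n ∧ 1 ≤ n ∧ ω n ∈ V}

/-- A time-homogeneous Markov chain, given by the family of its path-space laws
`P z` (the law of the whole trajectory when started at `z`). -/
structure MarkovFamily (S : Type*) [MeasurableSpace S] where
  P : S → Measure (ℕ → S)
  prob : ∀ z, IsProbabilityMeasure (P z)
  meas : Measurable P
  start : ∀ z, P z {ω | ω 0 = z} = 1
  markov : ∀ (z : S) (n : ℕ) (B : Set (ℕ → S)),
      MeasurableSet[MeasurableSpace.comap (fun (ω : ℕ → S) (i : Fin (n+1)) => ω i) inferInstance] B →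
      ∀ A : Set (ℕ → S), MeasurableSet A →
        P z (B ∩ {ω | (fun k => ω (n + k)) ∈ A}) = ∫⁻ ω in B, P (ω n) A ∂ P z

/-- A set `D` is positive recurrent for the chain: the hitting time of `D` is a.s. finite
from every initial state, and its expectation is bounded uniformly over initial states in `D`. -/
def PosRec {S : Type*} [MeasurableSpace S] (F : MarkovFamily S) (D : Set S) : Prop :=
  (∀ z, F.P z {ω | hitTime D ω < ⊤} = 1) ∧
  ∃ C : ℝ≥0∞, C < ⊤ ∧ ∀ z ∈ D, ∫⁻ ω, hitTime D ω ∂ F.P z ≤ C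


variable {X Y : Type*} [MeasurableSpace X] [MeasurableSpace Y]

open Classical in
/-- The expected hitting time of `V` (at a time `≥ 1`), as the test function `L1`:
`L1 x = E_x τ_V` for `x ∉ V` and `L1 x = 0` for `x ∈ V`. -/
def L1fun (XC : MarkovFamily X) (V : Set X) (x : X) : ℝ≥0∞ :=
  if x ∈ V then 0 else ∫⁻ ω, hitTime V ω ∂ XC.P x

/-- Conditions A of the paper for the two-component chain `chain` on `X × Y` whose first
component is the autonomous Markov chain `XC`:  autonomy of the `X`-component (A0), positive
recurrence of the set `V` for the `X`-chain, existence of a stationary distribution `π` for the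
`X`-chain with convergence to it in total variation from every point, uniformly over `V`, and
sublinear growth of `E_x L1(X^t)` uniformly over `x ∈ V`. -/
def CondA (chain : MarkovFamily (X × Y)) (XC : MarkovFamily X) (V : Set X)
    (π : Measure X) : Prop :=
  MeasurableSet V ∧
  -- A0 : the X-component evolves autonomously, with path law `XC.P x` for any initial `y`
  (∀ x y, Measure.map (fun (ω : ℕ → X × Y) (n : ℕ) => (ω n).1) (chain.P (x, y)) = XC.P x) ∧
  -- the hitting time of V is a.s. finite from every initial state
  (∀ x, XC.P x {ω | hitTime V ω < ⊤} = 1) ∧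
  -- and its expectation is uniformly bounded on V
  (∃ s0 : ℝ≥0∞, s0 < ⊤ ∧ ∀ x ∈ V, ∫⁻ ω, hitTime V ω ∂ XC.P x ≤ s0) ∧
  -- π is a stationary distribution of the X-chain
  IsProbabilityMeasure π ∧
  (∀ B : Set X, MeasurableSet B → ∫⁻ x, XC.P x {ω | ω 1 ∈ B} ∂π = π B) ∧
  -- convergence to π in total variation from every initial state
  (∀ x, ∀ ε : ℝ, 0 < ε → ∃ T : ℕ, ∀ t ≥ T, ∀ B : Set X, MeasurableSet B →
      |(XC.P x {ω | ω t ∈ B}).toReal - (π B).toReal| ≤ ε) ∧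
  -- uniformly over x ∈ V
  (∀ ε : ℝ, 0 < ε → ∃ T : ℕ, ∀ t ≥ T, ∀ x ∈ V, ∀ B : Set X, MeasurableSet B →
      |(XC.P x {ω | ω t ∈ B}).toReal - (π B).toReal| ≤ ε) ∧
  -- (1/t) sup_{x ∈ V} E_x L1(X^t) → 0
  (∀ ε : ℝ, 0 < ε → ∃ T : ℕ, ∀ t ≥ T, ∀ x ∈ V,
      ∫⁻ ω, L1fun XC V (ω t) ∂ XC.P x ≤ ENNReal.ofReal (ε * t))

/-- Condition B1 of the paper: the absolute increments of `L2` along the `Y`-component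
have expectations bounded by `U`, uniformly in the initial state. -/
def CondB1 (chain : MarkovFamily (X × Y)) (L2 : Y → ℝ) (U : ℝ) : Prop :=
  Measurable L2 ∧ (∀ y, 0 ≤ L2 y) ∧
  ∀ (x : X) (y : Y),
    ∫⁻ ω, ENNReal.ofReal |L2 (ω 1).2 - L2 y| ∂ chain.P (x, y) ≤ ENNReal.ofReal U

/-- Condition B2 of the paper: a drift inequality
`E_{x,y}[L2(Y^1) - L2(y)] ≤ f x + h (L2 y)` with `h ↓ 0` and `∫ f dπ = -ε < 0`. -/
def CondB2 (chain : MarkovFamily (X × Y)) (π : Measure X) (L2 : Y → ℝ)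
    (h : ℝ → ℝ) (f : X → ℝ) (ε : ℝ) : Prop :=
  Antitone h ∧ (∀ r : ℝ, 0 ≤ h r) ∧ Tendsto h atTop (nhds 0) ∧
  Measurable f ∧ (∃ K : ℝ, ∀ x, |f x| ≤ K) ∧
  0 < ε ∧ (∫ x, f x ∂π = -ε) ∧
  ∀ (x : X) (y : Y),
    ∫ ω, (L2 (ω 1).2 - L2 y) ∂ chain.P (x, y) ≤ f x + h (L2 y)

end

variable {M : ℕ} {Yi : Fin M → Type*} [∀ i, MeasurableSpace (Yi i)]

/-- Condition B̃1 of the paper (multivariate case): for each coordinate `i`, the absolute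
increments of `L2 i` along the `i`-th coordinate of the `Y`-component have expectations
bounded by `U`, uniformly in the initial state. -/
def CondB1multi {X : Type*} [MeasurableSpace X]
    (chain : MarkovFamily (X × (∀ i, Yi i))) (L2 : ∀ i, Yi i → ℝ) (U : ℝ) : Prop :=
  (∀ i, Measurable (L2 i)) ∧ (∀ i y, 0 ≤ L2 i y) ∧
  ∀ (i : Fin M) (x : X) (y : ∀ i, Yi i),
    ∫⁻ ω, ENNReal.ofReal |L2 i ((ω 1).2 i) - L2 i (y i)| ∂ chain.P (x, y) ≤ ENNReal.ofReal U

/-- Condition B̃2 of the paper (multivariate case): for each coordinate `i`, a drift inequality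
`E_{x,y}[L2_i(Y_i^1) - L2_i(y_i)] ≤ f_i x + h_i (L2_i y_i)` with `h_i ↓ 0`, `f_i` bounded
measurable and `∫ f_i dπ = -ε_i < 0`; note that the right-hand side depends only on `x` and on
the `i`-th coordinate of `y`. -/
def CondB2multi {X : Type*} [MeasurableSpace X]
    (chain : MarkovFamily (X × (∀ i, Yi i))) (π : Measure X) (L2 : ∀ i, Yi i → ℝ)
    (h : Fin M → ℝ → ℝ) (f : Fin M → X → ℝ) (εs : Fin M → ℝ) : Prop :=
  ∀ i : Fin M,
    Antitone (h i) ∧ (∀ r : ℝ, 0 ≤ h i r) ∧ Tendsto (h i) atTop (nhds 0) ∧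
    Measurable (f i) ∧ (∃ K : ℝ, ∀ x, |f i x| ≤ K) ∧
    0 < εs i ∧ (∫ x, f i x ∂π = -εs i) ∧
    ∀ (x : X) (y : ∀ i, Yi i),
      ∫ ω, (L2 i ((ω 1).2 i) - L2 i (y i)) ∂ chain.P (x, y) ≤ f i x + h i (L2 i (y i))

/-- Condition B̃3 of the paper: for each coordinate `i`, the `t`-step drift of `L2 i` grows
sublinearly in `t`, uniformly over `x ∈ V` and all `y`. -/
def CondB3multi {X : Type*} [MeasurableSpace X]
    (chain : MarkovFamily (X × (∀ i, Yi i))) (V : Set X) (L2 : ∀ i, Yi i → ℝ) : Prop :=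
  ∀ i : Fin M, ∀ ε : ℝ, 0 < ε → ∃ N : ℕ, ∀ t ≥ N, ∀ x ∈ V, ∀ y : ∀ i, Yi i,
    ∫ ω, (L2 i ((ω t).2 i) - L2 i (y i)) ∂ chain.P (x, y) ≤ ε * t

section AuxLemmas

open MeasureTheory ProbabilityTheory Filter Set
open scoped ENNReal

variable {Z : Type*} [MeasurableSpace Z]

/-- The one-step transition kernel of a `MarkovFamily` path law, `z ↦ P z`. -/
noncomputable def MarkovFamily.ker (F : MarkovFamily Z) : Kernel Z (ℕ → Z) :=
  ⟨F.P, F.meas⟩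

instance (F : MarkovFamily Z) : IsMarkovKernel F.ker := ⟨fun a => F.prob a⟩

lemma MarkovFamily.ker_apply (F : MarkovFamily Z) (z : Z) : F.ker z = F.P z := rfl

lemma measurable_shift (n : ℕ) : Measurable (fun (ω : ℕ → Z) k => ω (n + k)) :=
  measurable_pi_lambda _ fun k => measurable_pi_apply (n + k)

/-- The law of the shifted path is the law of the path started afresh from the time-`n`
position: formally, it is the second marginal of `(law of ω n) ⊗ₘ (path kernel)`. -/
lemma MarkovFamily.shift_law (F : MarkovFamily Z) (z : Z) (n : ℕ) :
    Measure.map (fun ω k => ω (n + k)) (F.P z)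
      = Measure.map Prod.snd (((F.P z).map (fun ω => ω n)) ⊗ₘ F.ker) := by
  haveI := F.prob z
  haveI : IsProbabilityMeasure ((F.P z).map (fun ω => ω n)) :=
    Measure.isProbabilityMeasure_map (measurable_pi_apply n).aemeasurable
  ext A hA
  rw [Measure.map_apply (measurable_shift n) hA, Measure.map_apply measurable_snd hA,
    Measure.compProd_apply (measurable_snd hA)]
  have hmk := F.markov z n univ MeasurableSet.univ A hA
  rw [Set.univ_inter, Measure.restrict_univ] at hmk
  have hpre : ∀ a : Z, (Prod.mk a) ⁻¹' (Prod.snd ⁻¹' A) = A := fun a => rfl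
  simp only [hpre]
  rw [lintegral_map (F.ker.measurable_coe hA) (measurable_pi_apply n)]
  exact hmk

lemma MarkovFamily.lintegral_shift (F : MarkovFamily Z) (z : Z) (n : ℕ)
    {G : (ℕ → Z) → ℝ≥0∞} (hG : Measurable G) :
    ∫⁻ ω, G (fun k => ω (n + k)) ∂ F.P z
      = ∫⁻ a, ∫⁻ ω, G ω ∂ F.P a ∂ ((F.P z).map (fun ω => ω n)) := by
  haveI := F.prob z
  haveI : IsProbabilityMeasure ((F.P z).map (fun ω => ω n)) :=
    Measure.isProbabilityMeasure_map (measurable_pi_apply n).aemeasurable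
  rw [← lintegral_map hG (measurable_shift n), F.shift_law z n,
    lintegral_map hG measurable_snd,
    Measure.lintegral_compProd (f := fun p : Z × (ℕ → Z) => G p.2) (hG.comp measurable_snd)]
  rfl

lemma MarkovFamily.integral_shift (F : MarkovFamily Z) (z : Z) (n : ℕ)
    {G : (ℕ → Z) → ℝ} (hG : Measurable G)
    (hint : Integrable (fun ω => G (fun k => ω (n + k))) (F.P z)) :
    ∫ ω, G (fun k => ω (n + k)) ∂ F.P z
      = ∫ a, ∫ ω, G ω ∂ F.P a ∂ ((F.P z).map (fun ω => ω n)) := by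
  haveI := F.prob z
  haveI : IsProbabilityMeasure ((F.P z).map (fun ω => ω n)) :=
    Measure.isProbabilityMeasure_map (measurable_pi_apply n).aemeasurable
  have h1 : Integrable G ((F.P z).map (fun ω k => ω (n + k))) :=
    (integrable_map_measure hG.aestronglyMeasurable (measurable_shift n).aemeasurable).mpr hint
  rw [F.shift_law z n] at h1
  have h2 : Integrable (fun p : Z × (ℕ → Z) => G p.2) (((F.P z).map (fun ω => ω n)) ⊗ₘ F.ker) :=
    (integrable_map_measure hG.aestronglyMeasurable measurable_snd.aemeasurable).mp h1
  rw [← integral_map (measurable_shift n).aemeasurable hG.aestronglyMeasurable,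
    F.shift_law z n, integral_map measurable_snd.aemeasurable hG.aestronglyMeasurable,
    Measure.integral_compProd h2]
  rfl

/-- Almost surely, any (real) function of the initial position of the path equals its value
at the starting point. -/
lemma MarkovFamily.ae_start (F : MarkovFamily Z) (z : Z) {g : Z → ℝ} (hg : Measurable g) :
    ∀ᵐ ω ∂ F.P z, g (ω 0) = g z := by
  haveI := F.prob z
  have hms : MeasurableSet {ω : ℕ → Z | g (ω 0) = g z} :=
    (hg.comp (measurable_pi_apply 0)) (measurableSet_singleton (g z))
  have h1 : F.P z {ω : ℕ → Z | g (ω 0) = g z} = 1 := by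
    refine le_antisymm prob_le_one ?_
    rw [← F.start z]
    exact measure_mono fun ω hω => by
      simp only [Set.mem_setOf_eq] at hω ⊢; rw [hω]
  have h0 := (prob_compl_eq_zero_iff hms).mpr h1
  rw [ae_iff]
  convert h0 using 2
  rfl

/-- Total-variation control of expectations of bounded measurable functions. -/
lemma tv_integral_bound {α : Type*} [MeasurableSpace α] (μ ν : Measure α)
    [IsProbabilityMeasure μ] [IsProbabilityMeasure ν] {g : α → ℝ} (hg : Measurable g)
    {K δ : ℝ} (hδ : 0 ≤ δ) (hgb : ∀ a, |g a| ≤ K)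
    (hTV : ∀ B : Set α, MeasurableSet B → |(μ B).toReal - (ν B).toReal| ≤ δ) :
    |∫ a, g a ∂μ - ∫ a, g a ∂ν| ≤ 2 * K * δ := by
  have hne : Nonempty α := by
    by_contra hcon
    have h1 : μ (univ : Set α) = 1 := measure_univ
    rw [Set.univ_eq_empty_iff.mpr (not_nonempty_iff.mp hcon), measure_empty] at h1
    exact zero_ne_one h1
  have hK : 0 ≤ K := (abs_nonneg _).trans (hgb (Classical.arbitrary _))
  set G : α → ℝ := fun a => g a + K with hGdef
  have hGm : Measurable G := hg.add_const K
  have hGnn : ∀ a, 0 ≤ G a := fun a => by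
    have := (abs_le.mp (hgb a)).1; simp only [hGdef]; linarith
  have hGub : ∀ a, G a ≤ 2 * K := fun a => by
    have := (abs_le.mp (hgb a)).2; simp only [hGdef]; linarith
  have hgi : ∀ (ρ : Measure α), IsProbabilityMeasure ρ → Integrable g ρ := fun ρ hρ =>
    Integrable.mono' (integrable_const K) hg.aestronglyMeasurable
      (Filter.Eventually.of_forall fun a => by rw [Real.norm_eq_abs]; exact hgb a)
  have hGi : ∀ (ρ : Measure α), IsProbabilityMeasure ρ → Integrable G ρ := fun ρ hρ =>
    (hgi ρ hρ).add (integrable_const K)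
  have hGint : ∀ (ρ : Measure α), IsProbabilityMeasure ρ →
      ∫ a, G a ∂ρ = ∫ a, g a ∂ρ + K := fun ρ hρ => by
    rw [hGdef]
    rw [integral_add (hgi ρ hρ) (integrable_const K), integral_const, probReal_univ]
    simp
  -- layer-cake representations
  have hlc : ∀ (ρ : Measure α), IsProbabilityMeasure ρ →
      ∫ a, G a ∂ρ = ∫ t in Ioi (0:ℝ), (ρ {a | t < G a}).toReal :=
    fun ρ hρ => (hGi ρ hρ).integral_eq_integral_meas_lt
      (Filter.Eventually.of_forall hGnn)
  set Fμ : ℝ → ℝ := fun t => (μ {a | t < G a}).toReal with hFμdef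
  set Fν : ℝ → ℝ := fun t => (ν {a | t < G a}).toReal with hFνdef
  have hanti : ∀ (ρ : Measure α), IsProbabilityMeasure ρ →
      Antitone (fun t => (ρ {a | t < G a}).toReal) := by
    intro ρ hρ s t hst
    exact ENNReal.toReal_mono (measure_ne_top ρ _)
      (measure_mono fun a ha => lt_of_le_of_lt hst ha)
  set bnd1 : ℝ → ℝ := (Ioc (0:ℝ) (2*K)).indicator (fun _ => (1:ℝ)) with hbnd1
  set bndδ : ℝ → ℝ := (Ioc (0:ℝ) (2*K)).indicator (fun _ => δ) with hbndδ
  have hbint : ∀ c : ℝ, Integrable ((Ioc (0:ℝ) (2*K)).indicator (fun _ => c))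
      (volume.restrict (Ioi (0:ℝ))) := by
    intro c
    rw [integrable_indicator_iff measurableSet_Ioc]
    refine integrableOn_const ?_
    exact (lt_of_le_of_lt (Measure.restrict_le_self _) measure_Ioc_lt_top).ne
  have hFint : ∀ (ρ : Measure α), IsProbabilityMeasure ρ →
      Integrable (fun t => (ρ {a | t < G a}).toReal) (volume.restrict (Ioi (0:ℝ))) := by
    intro ρ hρ
    refine Integrable.mono' (hbint 1) ((hanti ρ hρ).measurable).aestronglyMeasurable ?_
    rw [ae_restrict_iff' measurableSet_Ioi]
    refine Filter.Eventually.of_forall fun t ht => ?_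
    rw [Real.norm_eq_abs, abs_of_nonneg ENNReal.toReal_nonneg]
    by_cases h2 : t ≤ 2*K
    · have hmem : t ∈ Set.Ioc (0:ℝ) (2*K) := ⟨ht, h2⟩
      have heq : (Set.Ioc (0:ℝ) (2*K)).indicator (fun _ => (1:ℝ)) t = 1 :=
        Set.indicator_of_mem hmem _
      rw [heq]
      exact ENNReal.toReal_le_of_le_ofReal zero_le_one (by simpa using prob_le_one)
    · have hempty : {a | t < G a} = ∅ := by
        ext a; simp only [Set.mem_setOf_eq, Set.mem_empty_iff_false, iff_false, not_lt]
        exact (hGub a).trans (le_of_not_ge h2)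
      have heq : (Set.Ioc (0:ℝ) (2*K)).indicator (fun _ => (1:ℝ)) t = 0 :=
        Set.indicator_of_notMem (fun hmem => h2 hmem.2) _
      rw [heq, hempty]
      simp
  have hdiff : ∀ t ∈ Ioi (0:ℝ), |Fμ t - Fν t| ≤ bndδ t := by
    intro t ht
    by_cases h2 : t ≤ 2*K
    · have hmem : t ∈ Set.Ioc (0:ℝ) (2*K) := ⟨ht, h2⟩
      have heq : bndδ t = δ := Set.indicator_of_mem hmem _
      rw [heq]
      exact hTV {a | t < G a} (hGm measurableSet_Ioi)
    · have hempty : {a | t < G a} = ∅ := by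
        ext a; simp only [Set.mem_setOf_eq, Set.mem_empty_iff_false, iff_false, not_lt]
        exact (hGub a).trans (le_of_not_ge h2)
      have heq : bndδ t = 0 := Set.indicator_of_notMem (fun hmem => h2 hmem.2) _
      rw [heq]
      simp only [hFμdef, hFνdef, hempty]
      simp
  have key : ∫ a, g a ∂μ - ∫ a, g a ∂ν = ∫ t in Ioi (0:ℝ), (Fμ t - Fν t) := by
    have h1 : ∫ a, g a ∂μ - ∫ a, g a ∂ν = ∫ a, G a ∂μ - ∫ a, G a ∂ν := by
      rw [hGint μ inferInstance, hGint ν inferInstance]; ring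
    rw [h1, hlc μ inferInstance, hlc ν inferInstance,
      ← integral_sub (hFint μ inferInstance) (hFint ν inferInstance)]
  rw [key]
  calc |∫ t in Ioi (0:ℝ), (Fμ t - Fν t)| ≤ ∫ t in Ioi (0:ℝ), |Fμ t - Fν t| := by
        simpa [Real.norm_eq_abs] using
          norm_integral_le_integral_norm (μ := volume.restrict (Ioi (0:ℝ)))
            (fun t => Fμ t - Fν t)
    _ ≤ ∫ t in Ioi (0:ℝ), bndδ t := by
        refine integral_mono_of_nonneg (Filter.Eventually.of_forall fun t => abs_nonneg _)
          (hbint δ) ?_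
        exact (ae_restrict_iff' measurableSet_Ioi).mpr (Filter.Eventually.of_forall hdiff)
    _ = 2 * K * δ := by
        rw [hbndδ, integral_indicator measurableSet_Ioc,
          Measure.restrict_restrict measurableSet_Ioc,
          Set.inter_eq_left.mpr (Set.Ioc_subset_Ioi_self), setIntegral_const]
        rw [measureReal_def, Real.volume_Ioc]
        rw [ENNReal.toReal_ofReal (by linarith)]
        rw [smul_eq_mul]; ring

end AuxLemmas

set_option maxHeartbeats 1600000 in
/-- **Lemma 2** (Foss–Shneer–Tyurlikov, multivariate drift lemma). Under Conditions A and
B̃1–B̃2, there is an integer `t'` such that for every `t ≥ t'` there is `N0 > 0` with: for each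
coordinate `i`, every `x ∈ V` and every `y` with `L2_i (y_i) ≥ N0`,
`E_{x,y}[L2_i(Y_i^t) - L2_i(y_i)] ≤ - t Δ`, where `Δ = (min_i ε_i) / 10`. -/
theorem lemma2_multivariate_drift
    {X : Type*} [MeasurableSpace X] [MeasurableSpace.CountablyGenerated X]
    {M : ℕ} (hM : 0 < M) {Yi : Fin M → Type*} [∀ i, MeasurableSpace (Yi i)]
    (chain : MarkovFamily (X × (∀ i, Yi i))) (XC : MarkovFamily X) (V : Set X) (π : Measure X)
    (L2 : ∀ i, Yi i → ℝ) (U : ℝ) (h : Fin M → ℝ → ℝ) (f : Fin M → X → ℝ) (εs : Fin M → ℝ)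
    (hA : CondA chain XC V π)
    (hB1 : CondB1multi chain L2 U)
    (hB2 : CondB2multi chain π L2 h f εs) :
    ∃ t' : ℕ, ∀ t : ℕ, t' ≤ t → ∃ N0 : ℝ, 0 < N0 ∧
      ∀ (i : Fin M), ∀ x ∈ V, ∀ y : ∀ i, Yi i, N0 ≤ L2 i (y i) →
        ∫ ω, (L2 i ((ω t).2 i) - L2 i (y i)) ∂ chain.P (x, y)
          ≤ -(t : ℝ) * ((⨅ i, εs i) / 10) := by
  classical
  obtain ⟨hV, hA0, hfin, hs0, hπ, hstat, hconv, hconvV, hL1⟩ := hA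
  obtain ⟨hL2meas, hL2nn, hB1'⟩ := hB1
  haveI : Nonempty (Fin M) := ⟨⟨0, hM⟩⟩
  haveI := hπ
  set εm : ℝ := ⨅ j, εs j with hεmdef
  have hεm_le : ∀ i, εm ≤ εs i := fun i => ciInf_le (Finite.bddBelow_range _) i
  have hεm_pos : 0 < εm := by
    obtain ⟨i0, -, hi0⟩ := Finset.exists_min_image Finset.univ εs ⟨Classical.arbitrary _,
      Finset.mem_univ _⟩
    have heq : εm = εs i0 := le_antisymm (hεm_le i0)
      (le_ciInf fun j => hi0 j (Finset.mem_univ j))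
    rw [heq]; exact (hB2 i0).2.2.2.2.2.1
  set U' : ℝ := max U 0 with hU'def
  have hU'nn : 0 ≤ U' := le_max_right _ _
  have key : ∀ i : Fin M, ∃ ti : ℕ, ∀ t : ℕ, ti ≤ t → ∃ N0 : ℝ, 0 < N0 ∧
      ∀ x ∈ V, ∀ y : ∀ j, Yi j, N0 ≤ L2 i (y i) →
        ∫ ω, (L2 i ((ω t).2 i) - L2 i (y i)) ∂ chain.P (x, y) ≤ -(t : ℝ) * (εm / 10) := by
    intro i
    obtain ⟨hanti, hhnn, hhtend, hfmeas, ⟨K0, hK0⟩, hεpos, hfint, hdrift⟩ := hB2 i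
    set K : ℝ := max K0 0 with hKdef
    have hK : ∀ x, |f i x| ≤ K := fun x => (hK0 x).trans (le_max_left _ _)
    have hKnn : 0 ≤ K := le_max_right _ _
    -- basic measurability
    have hA_meas : ∀ n : ℕ, Measurable (fun ω : ℕ → X × (∀ j, Yi j) => L2 i ((ω n).2 i)) :=
      fun n => (hL2meas i).comp
        ((measurable_pi_apply i).comp (measurable_snd.comp (measurable_pi_apply n)))
    have hL2coord : Measurable (fun z : X × (∀ j, Yi j) => L2 i (z.2 i)) :=
      (hL2meas i).comp ((measurable_pi_apply i).comp measurable_snd)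
    set G : (ℕ → X × (∀ j, Yi j)) → ℝ := fun ω => L2 i ((ω 1).2 i) - L2 i ((ω 0).2 i)
      with hGdef
    have hGmeas : Measurable G := (hA_meas 1).sub (hA_meas 0)
    -- one-step absolute increment bound, from any state
    have hGa : ∀ a : X × (∀ j, Yi j),
        ∫⁻ ω, ENNReal.ofReal |G ω| ∂ chain.P a ≤ ENNReal.ofReal U := by
      intro a
      have hae := chain.ae_start a hL2coord
      have heq : ∫⁻ ω, ENNReal.ofReal |G ω| ∂ chain.P a
          = ∫⁻ ω, ENNReal.ofReal |L2 i ((ω 1).2 i) - L2 i (a.2 i)| ∂ chain.P a := by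
        refine lintegral_congr_ae ?_
        filter_upwards [hae] with ω hω
        rw [hGdef]; simp only; rw [hω]
      rw [heq]
      have hb := hB1' i a.1 a.2
      rwa [Prod.mk.eta] at hb
    have hGint : ∀ a, Integrable G (chain.P a) := by
      intro a
      refine ⟨hGmeas.aestronglyMeasurable, ?_⟩
      rw [hasFiniteIntegral_iff_norm]
      exact lt_of_le_of_lt (by simpa [Real.norm_eq_abs] using hGa a) ENNReal.ofReal_lt_top
    -- the one-step drift function φ
    set φ : X × (∀ j, Yi j) → ℝ := fun a => ∫ ω, G ω ∂ chain.P a with hφdef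
    have hφsm : StronglyMeasurable φ := by
      have hsm : StronglyMeasurable
          (fun p : (X × (∀ j, Yi j)) × (ℕ → X × (∀ j, Yi j)) => G p.2) :=
        (hGmeas.comp measurable_snd).stronglyMeasurable
      exact hsm.integral_kernel_prod_right' (κ := chain.ker)
    have hφbd : ∀ a, ‖φ a‖ ≤ U' := by
      intro a
      refine le_trans (norm_integral_le_lintegral_norm G) ?_
      have h1 : (∫⁻ ω, ENNReal.ofReal ‖G ω‖ ∂ chain.P a).toReal
          ≤ (ENNReal.ofReal U).toReal := by
        refine ENNReal.toReal_mono ENNReal.ofReal_ne_top ?_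
        simpa [Real.norm_eq_abs] using hGa a
      refine h1.trans ?_
      rcases le_or_gt 0 U with hU | hU
      · rw [ENNReal.toReal_ofReal hU]; exact le_max_left _ _
      · rw [ENNReal.ofReal_of_nonpos hU.le]; simpa using hU'nn
    have hφle : ∀ a, φ a ≤ f i a.1 + h i (L2 i (a.2 i)) := by
      intro a
      have hae := chain.ae_start a hL2coord
      have heq : φ a = ∫ ω, (L2 i ((ω 1).2 i) - L2 i (a.2 i)) ∂ chain.P a := by
        refine integral_congr_ae ?_
        filter_upwards [hae] with ω hω
        rw [hGdef]; simp only; rw [hω]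
      rw [heq]
      have hb := hdrift a.1 a.2
      rwa [Prod.mk.eta] at hb
    -- constants
    set ε' : ℝ := εm / (40 * (K + 1)) with hε'def
    have hε'pos : 0 < ε' := by positivity
    obtain ⟨T1, hT1⟩ := hconvV ε' hε'pos
    have hhsmall : ∃ R : ℝ, ∀ r ≥ R, h i r ≤ εm / 20 := by
      have hev := hhtend.eventually (eventually_le_nhds (by positivity : (0:ℝ) < εm / 20))
      rw [eventually_atTop] at hev; exact hev
    obtain ⟨R, hR⟩ := hhsmall
    refine ⟨T1 + 1 + Nat.ceil ((4 * T1 * (K + εm)) / (3 * εm)), fun t htt => ?_⟩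
    have hT1t : T1 ≤ t := le_trans (by omega) htt
    have htlarge : 4 * (T1:ℝ) * (K + εm) ≤ (t:ℝ) * (3 * εm) := by
      have h1 : Nat.ceil ((4 * T1 * (K + εm)) / (3 * εm)) ≤ t := le_trans (by omega) htt
      have h2 : (4 * T1 * (K + εm)) / (3 * εm) ≤ (t:ℝ) := by
        exact_mod_cast (Nat.ceil_le.mp h1)
      rw [div_le_iff₀ (by positivity)] at h2
      linarith
    -- the cutoff N0
    set N0 : ℝ := max (2 * (|R| + 1)) (2 * t * U' * h i 0 / (εm / 20) + 1) with hN0def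
    have hN0pos : 0 < N0 := lt_max_iff.mpr (Or.inl (by positivity))
    refine ⟨N0, hN0pos, ?_⟩
    intro x hx y hy
    set μ := chain.P (x, y) with hμdef
    haveI : IsProbabilityMeasure μ := chain.prob (x, y)
    set c : ℝ := L2 i (y i) with hcdef
    -- the increments of L2 are uniformly small in expectation
    have hincr : ∀ n : ℕ,
        ∫⁻ ω, ENNReal.ofReal |L2 i ((ω (n+1)).2 i) - L2 i ((ω n).2 i)| ∂ μ
          ≤ ENNReal.ofReal U := by
      intro n
      have hsh := chain.lintegral_shift (x, y) n
        (G := fun ω => ENNReal.ofReal |G ω|)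
        (ENNReal.measurable_ofReal.comp hGmeas.abs)
      have heqfun : (fun ω : ℕ → X × (∀ j, Yi j) =>
            ENNReal.ofReal |G (fun k => ω (n + k))|)
          = fun ω => ENNReal.ofReal |L2 i ((ω (n+1)).2 i) - L2 i ((ω n).2 i)| := rfl
      rw [heqfun] at hsh
      rw [hμdef, hsh]
      haveI : IsProbabilityMeasure ((chain.P (x, y)).map (fun ω => ω n)) :=
        Measure.isProbabilityMeasure_map (measurable_pi_apply n).aemeasurable
      calc ∫⁻ a, ∫⁻ ω, ENNReal.ofReal |G ω| ∂ chain.P a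
            ∂ ((chain.P (x, y)).map (fun ω => ω n))
          ≤ ∫⁻ _, ENNReal.ofReal U ∂ ((chain.P (x, y)).map (fun ω => ω n)) :=
            lintegral_mono fun a => hGa a
        _ = ENNReal.ofReal U := by simp
    have htot : ∀ n : ℕ,
        ∫⁻ ω, ENNReal.ofReal |L2 i ((ω n).2 i) - c| ∂ μ ≤ n * ENNReal.ofReal U := by
      intro n
      induction n with
      | zero =>
        have hae := chain.ae_start (x, y) hL2coord
        have heq : ∫⁻ ω, ENNReal.ofReal |L2 i ((ω 0).2 i) - c| ∂ μ = 0 := by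
          rw [← lintegral_zero (μ := μ)]
          refine lintegral_congr_ae ?_
          filter_upwards [hae] with ω hω
          rw [hcdef, hω]
          simp
        rw [heq]; simp
      | succ n ih =>
        have hptw : ∀ ω : ℕ → X × (∀ j, Yi j),
            ENNReal.ofReal |L2 i ((ω (n+1)).2 i) - c|
              ≤ ENNReal.ofReal |L2 i ((ω (n+1)).2 i) - L2 i ((ω n).2 i)|
                + ENNReal.ofReal |L2 i ((ω n).2 i) - c| := by
          intro ω
          refine le_trans (ENNReal.ofReal_le_ofReal
            (abs_sub_le (L2 i ((ω (n+1)).2 i)) (L2 i ((ω n).2 i)) c)) ?_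
          exact ENNReal.ofReal_add_le
        calc ∫⁻ ω, ENNReal.ofReal |L2 i ((ω (n+1)).2 i) - c| ∂ μ
            ≤ ∫⁻ ω, (ENNReal.ofReal |L2 i ((ω (n+1)).2 i) - L2 i ((ω n).2 i)|
                + ENNReal.ofReal |L2 i ((ω n).2 i) - c|) ∂ μ := lintegral_mono hptw
          _ = ∫⁻ ω, ENNReal.ofReal |L2 i ((ω (n+1)).2 i) - L2 i ((ω n).2 i)| ∂ μ
                + ∫⁻ ω, ENNReal.ofReal |L2 i ((ω n).2 i) - c| ∂ μ :=
              lintegral_add_left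
                (ENNReal.measurable_ofReal.comp ((hA_meas (n+1)).sub (hA_meas n)).abs) _
          _ ≤ ENNReal.ofReal U + n * ENNReal.ofReal U := add_le_add (hincr n) ih
          _ = (n + 1 : ℕ) * ENNReal.ofReal U := by
              push_cast; rw [add_mul, one_mul, add_comm]
    have hInt : ∀ n : ℕ, Integrable (fun ω => L2 i ((ω n).2 i) - c) μ := by
      intro n
      refine ⟨((hA_meas n).sub measurable_const).aestronglyMeasurable, ?_⟩
      rw [hasFiniteIntegral_iff_norm]
      refine lt_of_le_of_lt (by simpa [Real.norm_eq_abs] using htot n) ?_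
      exact ENNReal.mul_lt_top (ENNReal.natCast_lt_top n) ENNReal.ofReal_lt_top
    set D : ℕ → ℝ := fun n => ∫ ω, (L2 i ((ω n).2 i) - c) ∂ μ with hDdef
    have hD0 : D 0 = 0 := by
      have hae := chain.ae_start (x, y) hL2coord
      rw [hDdef]
      simp only
      rw [← integral_zero (ℕ → X × (∀ j, Yi j)) ℝ (μ := μ)]
      refine integral_congr_ae ?_
      filter_upwards [hae] with ω hω
      rw [hcdef, hω]
      simp
    -- the per-step expected drift terms
    set Fn : ℕ → ℝ := fun n => ∫ ω, f i ((ω n).1) ∂ μ with hFndef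
    set Hn : ℕ → ℝ := fun n => ∫ ω, h i (L2 i ((ω n).2 i)) ∂ μ with hHndef
    have hfn_meas : ∀ n : ℕ, Measurable (fun ω : ℕ → X × (∀ j, Yi j) => f i ((ω n).1)) :=
      fun n => hfmeas.comp (measurable_fst.comp (measurable_pi_apply n))
    have hfn_int : ∀ n, Integrable (fun ω : ℕ → X × (∀ j, Yi j) => f i ((ω n).1)) μ :=
      fun n => Integrable.mono' (integrable_const K) (hfn_meas n).aestronglyMeasurable
        (Filter.Eventually.of_forall fun ω => by rw [Real.norm_eq_abs]; exact hK _)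
    have hh_meas : Measurable (h i) := hanti.measurable
    have hhn_meas : ∀ n : ℕ,
        Measurable (fun ω : ℕ → X × (∀ j, Yi j) => h i (L2 i ((ω n).2 i))) :=
      fun n => hh_meas.comp (hA_meas n)
    have hh_ub : ∀ r : ℝ, 0 ≤ r → h i r ≤ h i 0 := fun r hr => hanti hr
    have hhn_int : ∀ n,
        Integrable (fun ω : ℕ → X × (∀ j, Yi j) => h i (L2 i ((ω n).2 i))) μ :=
      fun n => Integrable.mono' (integrable_const (h i 0)) (hhn_meas n).aestronglyMeasurable
        (Filter.Eventually.of_forall fun ω => by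
          rw [Real.norm_eq_abs, abs_of_nonneg (hhnn _)]
          exact hh_ub _ (hL2nn i _))
    -- one-step inequality
    have hstep : ∀ n : ℕ, D (n+1) - D n ≤ Fn n + Hn n := by
      intro n
      have hfun : (fun ω : ℕ → X × (∀ j, Yi j) =>
            (L2 i ((ω (n+1)).2 i) - c) - (L2 i ((ω n).2 i) - c))
          = fun ω => G (fun k => ω (n + k)) := by
        funext ω; rw [hGdef]; simp only; ring_nf
      have hint' : Integrable (fun ω : ℕ → X × (∀ j, Yi j) =>
          G (fun k => ω (n + k))) μ := by
        rw [← hfun]; exact (hInt (n+1)).sub (hInt n)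
      have h1 : D (n+1) - D n = ∫ ω, G (fun k => ω (n + k)) ∂ μ := by
        rw [hDdef]; simp only
        rw [← integral_sub (hInt (n+1)) (hInt n), ← hfun]
      set ν := μ.map (fun ω => ω n) with hνdef
      haveI : IsProbabilityMeasure ν :=
        Measure.isProbabilityMeasure_map (measurable_pi_apply n).aemeasurable
      have h2 : ∫ ω, G (fun k => ω (n + k)) ∂ μ = ∫ a, φ a ∂ ν :=
        chain.integral_shift (x, y) n hGmeas hint'
      have hφint : Integrable φ ν :=
        Integrable.mono' (integrable_const U') hφsm.aestronglyMeasurable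
          (Filter.Eventually.of_forall hφbd)
      set ψ : X × (∀ j, Yi j) → ℝ := fun a => f i a.1 + h i (L2 i (a.2 i)) with hψdef
      have hψmeas : Measurable ψ :=
        (hfmeas.comp measurable_fst).add (hh_meas.comp hL2coord)
      have hψint : Integrable ψ ν :=
        Integrable.mono' (integrable_const (K + h i 0)) hψmeas.aestronglyMeasurable
          (Filter.Eventually.of_forall fun a => by
            rw [hψdef, Real.norm_eq_abs]
            refine (abs_add_le _ _).trans (add_le_add (hK _) ?_)
            rw [abs_of_nonneg (hhnn _)]
            exact hh_ub _ (hL2nn i _))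
      have h3 : ∫ a, φ a ∂ ν ≤ ∫ a, ψ a ∂ ν := integral_mono hφint hψint hφle
      have h4 : ∫ a, ψ a ∂ ν = Fn n + Hn n := by
        have hsplit : ∫ a, ψ a ∂ ν
            = ∫ a, f i a.1 ∂ ν + ∫ a, h i (L2 i (a.2 i)) ∂ ν := by
          rw [hψdef]
          exact integral_add
            (Integrable.mono' (integrable_const K)
              ((hfmeas.comp measurable_fst)).aestronglyMeasurable
              (Filter.Eventually.of_forall fun a => by
                rw [Real.norm_eq_abs]; exact hK _))
            (Integrable.mono' (integrable_const (h i 0))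
              (hh_meas.comp hL2coord).aestronglyMeasurable
              (Filter.Eventually.of_forall fun a => by
                rw [Real.norm_eq_abs, abs_of_nonneg (hhnn _)]
                exact hh_ub _ (hL2nn i _)))
        rw [hsplit, hνdef,
          integral_map (measurable_pi_apply n).aemeasurable
            (hfmeas.comp measurable_fst).aestronglyMeasurable,
          integral_map (measurable_pi_apply n).aemeasurable
            (hh_meas.comp hL2coord).aestronglyMeasurable]
      linarith [h1, h2, h3, h4]
    -- bounds on Fn
    have hF1 : ∀ n : ℕ, Fn n ≤ K := by
      intro n
      have h1 : Fn n ≤ ∫ _, K ∂ μ :=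
        integral_mono (hfn_int n) (integrable_const K)
          (fun ω => (abs_le.mp (hK _)).2)
      simpa using h1
    have hF2 : ∀ n : ℕ, T1 ≤ n → Fn n ≤ -εm + εm / 20 := by
      intro n hn
      set ρ : Measure X := μ.map (fun ω => (ω n).1) with hρdef
      have hproj_meas : Measurable (fun (ω : ℕ → X × (∀ j, Yi j)) (m : ℕ) => (ω m).1) :=
        measurable_pi_lambda _ fun m => measurable_fst.comp (measurable_pi_apply m)
      have hXn : Measurable (fun ω : ℕ → X × (∀ j, Yi j) => (ω n).1) :=
        measurable_fst.comp (measurable_pi_apply n)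
      have hρeq : ρ = (XC.P x).map (fun ω => ω n) := by
        rw [hρdef, hμdef, ← hA0 x y,
          Measure.map_map (measurable_pi_apply n) hproj_meas]
        rfl
      haveI : IsProbabilityMeasure ρ := by
        rw [hρdef]; exact Measure.isProbabilityMeasure_map hXn.aemeasurable
      have hTVn : ∀ B : Set X, MeasurableSet B → |(ρ B).toReal - (π B).toReal| ≤ ε' := by
        intro B hB
        have h1 : ρ B = XC.P x {ω | ω n ∈ B} := by
          rw [hρeq, Measure.map_apply (measurable_pi_apply n) hB]
          rfl
        rw [h1]
        exact hT1 n hn x hx B hB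
      have htv := tv_integral_bound ρ π hfmeas hε'pos.le hK hTVn
      have hFneq : Fn n = ∫ x', f i x' ∂ ρ := by
        rw [hFndef, hρdef]
        simp only
        rw [integral_map hXn.aemeasurable hfmeas.aestronglyMeasurable]
      have h2K : 2 * K * ε' ≤ εm / 20 := by
        have e : 2 * K * ε' = (2 * K * εm) / (40 * (K + 1)) := by rw [hε'def]; ring
        rw [e, div_le_div_iff₀ (by positivity) (by norm_num : (0:ℝ) < 20)]
        nlinarith [hεm_pos.le, hKnn]
      rw [hFneq]
      have h5 : ∫ x', f i x' ∂ ρ - ∫ x', f i x' ∂ π ≤ 2 * K * ε' :=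
        (le_abs_self _).trans htv
      rw [hfint] at h5
      have h6 : -εs i ≤ -εm := by linarith [hεm_le i]
      linarith
    -- bound on Hn
    have hH : ∀ n : ℕ, n ≤ t → Hn n ≤ εm / 10 := by
      intro n hn
      set E : Set (ℕ → X × (∀ j, Yi j)) := {ω | L2 i ((ω n).2 i) < N0 / 2} with hEdef
      have hE : MeasurableSet E := (hA_meas n) measurableSet_Iio
      have hptw : ∀ ω : ℕ → X × (∀ j, Yi j),
          h i (L2 i ((ω n).2 i)) ≤ h i (N0 / 2) + E.indicator (fun _ => h i 0) ω := by
        intro ω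
        by_cases hω : ω ∈ E
        · rw [Set.indicator_of_mem hω]
          have := hh_ub _ (hL2nn i ((ω n).2 i))
          linarith [hhnn (N0 / 2)]
        · rw [Set.indicator_of_notMem hω]
          have hge : N0 / 2 ≤ L2 i ((ω n).2 i) := le_of_not_gt hω
          simpa using hanti hge
      have hbig : Hn n ≤ h i (N0 / 2) + h i 0 * (μ E).toReal := by
        have h1 : Hn n ≤ ∫ ω, (h i (N0 / 2) + E.indicator (fun _ => h i 0) ω) ∂ μ := by
          refine integral_mono (hhn_int n) ?_ hptw
          exact (integrable_const _).add
            ((integrable_indicator_iff hE).mpr (integrableOn_const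
              (measure_lt_top _ _).ne))
        have h2 : ∫ ω, (h i (N0 / 2) + E.indicator (fun _ => h i 0) ω) ∂ μ
            = h i (N0 / 2) + (μ E).toReal * h i 0 := by
          rw [integral_add (integrable_const _)
            ((integrable_indicator_iff hE).mpr (integrableOn_const
              (measure_lt_top _ _).ne)),
            integral_indicator_const _ hE]
          simp [smul_eq_mul, measureReal_def]
        rw [h2] at h1
        linarith [h1]
      -- Markov inequality
      have hμE : (μ E).toReal ≤ (t : ℝ) * U' / (N0 / 2) := by
        have hsub : E ⊆ {ω | ENNReal.ofReal (N0 / 2)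
            ≤ ENNReal.ofReal |L2 i ((ω n).2 i) - c|} := by
          intro ω hω
          simp only [hEdef, Set.mem_setOf_eq] at hω ⊢
          refine ENNReal.ofReal_le_ofReal ?_
          rw [abs_sub_comm, abs_of_nonneg (by rw [hcdef]; linarith [le_trans hy (le_refl c)])]
          rw [hcdef]
          linarith [hy]
        have h1 : ENNReal.ofReal (N0 / 2) * μ E
            ≤ (t : ℝ≥0∞) * ENNReal.ofReal U' := by
          calc ENNReal.ofReal (N0 / 2) * μ E
              ≤ ENNReal.ofReal (N0 / 2) * μ {ω | ENNReal.ofReal (N0 / 2)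
                  ≤ ENNReal.ofReal |L2 i ((ω n).2 i) - c|} :=
                mul_le_mul_right (measure_mono hsub) _
            _ ≤ ∫⁻ ω, ENNReal.ofReal |L2 i ((ω n).2 i) - c| ∂ μ :=
                mul_meas_ge_le_lintegral₀
                  ((ENNReal.measurable_ofReal.comp
                    ((hA_meas n).sub measurable_const).abs).aemeasurable) _
            _ ≤ n * ENNReal.ofReal U := htot n
            _ ≤ (t : ℝ≥0∞) * ENNReal.ofReal U' := by
                refine mul_le_mul' (by exact_mod_cast Nat.cast_le.mpr hn) ?_
                exact ENNReal.ofReal_le_ofReal (le_max_left _ _)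
        have hN2 : 0 < N0 / 2 := by positivity
        have h2 : μ E ≤ (t : ℝ≥0∞) * ENNReal.ofReal U' / ENNReal.ofReal (N0 / 2) := by
          rw [ENNReal.le_div_iff_mul_le
            (Or.inl (by simpa using hN2)) (Or.inl ENNReal.ofReal_ne_top)]
          rw [mul_comm]
          exact h1
        have h3 : ((t : ℝ≥0∞) * ENNReal.ofReal U' / ENNReal.ofReal (N0 / 2)).toReal
            = (t : ℝ) * U' / (N0 / 2) := by
          rw [ENNReal.toReal_div, ENNReal.toReal_mul, ENNReal.toReal_natCast,
            ENNReal.toReal_ofReal hU'nn, ENNReal.toReal_ofReal hN2.le]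
        calc (μ E).toReal ≤ ((t : ℝ≥0∞) * ENNReal.ofReal U'
              / ENNReal.ofReal (N0 / 2)).toReal := by
              refine ENNReal.toReal_mono ?_ h2
              exact (ENNReal.div_lt_top
                (ENNReal.mul_ne_top (ENNReal.natCast_ne_top t) ENNReal.ofReal_ne_top)
                (by simpa using hN2)).ne
          _ = (t : ℝ) * U' / (N0 / 2) := h3
      -- choice of N0 kicks in
      have hsmall1 : h i (N0 / 2) ≤ εm / 20 := by
        refine hR _ ?_
        have : 2 * (|R| + 1) ≤ N0 := le_max_left _ _
        have hRabs : R ≤ |R| := le_abs_self R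
        linarith
      have hsmall2 : h i 0 * (μ E).toReal ≤ εm / 20 := by
        have hB0 : (0:ℝ) ≤ 2 * t * U' * h i 0 :=
          mul_nonneg (mul_nonneg (by positivity) hU'nn) (hhnn 0)
        have hN0ge : 2 * t * U' * h i 0 / (εm / 20) + 1 ≤ N0 := le_max_right _ _
        have h20 : (0:ℝ) < εm / 20 := by positivity
        have hq : 2 * t * U' * h i 0 ≤ (εm / 20) * N0 := by
          have e1 : (2 * t * U' * h i 0 / (εm / 20) + 1) * (εm / 20)
              = 2 * t * U' * h i 0 + εm / 20 := by
            rw [add_mul, one_mul, div_mul_cancel₀ _ h20.ne']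
          have e2 := mul_le_mul_of_nonneg_right hN0ge h20.le
          rw [e1] at e2
          nlinarith [e2]
        have h1 : h i 0 * (μ E).toReal ≤ h i 0 * ((t : ℝ) * U' / (N0 / 2)) :=
          mul_le_mul_of_nonneg_left hμE (hhnn 0)
        have h2 : h i 0 * ((t : ℝ) * U' / (N0 / 2)) = 2 * t * U' * h i 0 / N0 := by
          rw [div_div_eq_mul_div]
          ring
        have h3 : 2 * t * U' * h i 0 / N0 ≤ εm / 20 := by
          rw [div_le_iff₀ hN0pos]
          linarith [hq]
        linarith [h1, h2.le, h2.ge]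
      calc Hn n ≤ h i (N0 / 2) + h i 0 * (μ E).toReal := hbig
        _ ≤ εm / 20 + εm / 20 := add_le_add hsmall1 hsmall2
        _ = εm / 10 := by ring
    -- assemble
    have htel : D t = ∑ n ∈ Finset.range t, (D (n+1) - D n) := by
      rw [Finset.sum_range_sub (f := D), hD0, sub_zero]
    have hsum : D t ≤ ∑ n ∈ Finset.range t, (Fn n + Hn n) := by
      rw [htel]
      exact Finset.sum_le_sum fun n _ => hstep n
    have hsumF : ∑ n ∈ Finset.range t, Fn n
        ≤ T1 * K + ((t : ℝ) - T1) * (-εm + εm / 20) := by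
      rw [Finset.range_eq_Ico, ← Finset.sum_Ico_consecutive _ (Nat.zero_le T1) hT1t]
      have h1 : ∑ n ∈ Finset.Ico 0 T1, Fn n ≤ T1 * K := by
        refine le_trans (Finset.sum_le_sum fun n _ => hF1 n) ?_
        rw [Finset.sum_const, Nat.card_Ico, Nat.sub_zero, nsmul_eq_mul]
      have h2 : ∑ n ∈ Finset.Ico T1 t, Fn n ≤ ((t : ℝ) - T1) * (-εm + εm / 20) := by
        refine le_trans (Finset.sum_le_sum fun n hn =>
          hF2 n (Finset.mem_Ico.mp hn).1) ?_
        rw [Finset.sum_const, Nat.card_Ico, nsmul_eq_mul, Nat.cast_sub hT1t]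
      linarith
    have hsumH : ∑ n ∈ Finset.range t, Hn n ≤ (t : ℝ) * (εm / 10) := by
      refine le_trans (Finset.sum_le_sum fun n hn =>
        hH n (le_of_lt (Finset.mem_range.mp hn))) ?_
      rw [Finset.sum_const, Finset.card_range, nsmul_eq_mul]
    have hfinal : D t ≤ -(t : ℝ) * (εm / 10) := by
      have hsplit : ∑ n ∈ Finset.range t, (Fn n + Hn n)
          = ∑ n ∈ Finset.range t, Fn n + ∑ n ∈ Finset.range t, Hn n :=
        Finset.sum_add_distrib
      have hT1εm : (0:ℝ) ≤ (T1 : ℝ) * εm := mul_nonneg (Nat.cast_nonneg T1) hεm_pos.le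
      have hT1K : (0:ℝ) ≤ (T1 : ℝ) * K := mul_nonneg (Nat.cast_nonneg T1) hKnn
      have hT1t' : (T1 : ℝ) ≤ (t : ℝ) := Nat.cast_le.mpr hT1t
      nlinarith [hsum, hsumF, hsumH, hsplit, htlarge]
    exact hfinal
  choose ti hti using key
  refine ⟨Finset.univ.sup ti, fun t ht => ?_⟩
  have h1 : ∀ i : Fin M, ∃ N0 : ℝ, 0 < N0 ∧
      ∀ x ∈ V, ∀ y : ∀ j, Yi j, N0 ≤ L2 i (y i) →
        ∫ ω, (L2 i ((ω t).2 i) - L2 i (y i)) ∂ chain.P (x, y) ≤ -(t : ℝ) * (εm / 10) :=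
    fun i => hti i t (le_trans (Finset.le_sup (Finset.mem_univ i)) ht)
  choose N0i hN0pos hN0 using h1
  refine ⟨Finset.univ.sup' Finset.univ_nonempty N0i, ?_, ?_⟩
  · exact lt_of_lt_of_le (hN0pos (Classical.arbitrary _))
      (Finset.le_sup' _ (Finset.mem_univ _))
  · intro i x hx y hy
    exact hN0 i x hx y (le_trans (Finset.le_sup' _ (Finset.mem_univ i)) hy)
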